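/- Let K₁, K₂ : ℝ → ℝ² be continuous injective maps and suppose there exists R > 0 such that K₁(t) = (t,0) and K₂(t) = (t,0) whenever |t| ≥ R. Then the concatenation K₁#K₂ : ℝ → ℝ² is a closed topological embedding of ℝ into ℝ². -/
import Mathlib


/-- The map `f_L(x,y) = (-e^{-x}, y)`. -/
noncomputable def fL (p : ℝ × ℝ) : ℝ × ℝ := (-Real.exp (-p.1), p.2)

/-- The map `f_R(x,y) = (e^{x}, y)`. -/
noncomputable def fR (p : ℝ × ℝ) : ℝ × ℝ := (Real.exp p.1, p.2)

/-- The concatenation `K₁ # K₂` of two long maps `ℝ → ℝ²`. -/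
noncomputable def concat (K₁ K₂ : ℝ → ℝ × ℝ) (t : ℝ) : ℝ × ℝ :=
  if t < 0 then fL (K₁ (-Real.log (-t)))
  else if t = 0 then (0, 0)
  else fR (K₂ (Real.log t))

open Real Filter Topology Set

lemma fL_injective : Function.Injective fL := by
  intro p q h
  simp only [fL, Prod.mk.injEq, neg_inj, Real.exp_eq_exp, neg_inj] at h
  exact Prod.ext h.1 h.2

lemma fR_injective : Function.Injective fR := by
  intro p q h
  simp only [fR, Prod.mk.injEq, Real.exp_eq_exp] at h
  exact Prod.ext h.1 h.2

lemma concat_eq_small (K₁ K₂ : ℝ → ℝ × ℝ) (R : ℝ) (hR : 0 < R)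
    (h₁ : ∀ t : ℝ, R ≤ |t| → K₁ t = (t, 0))
    (h₂ : ∀ t : ℝ, R ≤ |t| → K₂ t = (t, 0)) :
    ∀ t : ℝ, |t| < Real.exp (-R) → concat K₁ K₂ t = (t, 0) := by
  intro t ht
  rcases lt_trichotomy t 0 with h | h | h
  · rw [concat, if_pos h]
    have hpos : 0 < -t := by linarith
    have hlt : -t < Real.exp (-R) := by rwa [abs_of_neg h] at ht
    have hlog : Real.log (-t) < -R := (Real.log_lt_iff_lt_exp hpos).2 hlt
    have habs : R ≤ |(-Real.log (-t))| := by
      rw [abs_of_pos (by linarith)]; linarith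
    rw [h₁ _ habs]
    simp only [fL, neg_neg, Real.exp_log hpos]
  · rw [concat, if_neg (by simp [h]), if_pos h, h]
  · rw [concat, if_neg (by linarith), if_neg (by linarith)]
    have hlt : t < Real.exp (-R) := by rwa [abs_of_pos h] at ht
    have hlog : Real.log t < -R := (Real.log_lt_iff_lt_exp h).2 hlt
    have habs : R ≤ |Real.log t| := by
      rw [abs_of_neg (by linarith)]; linarith
    rw [h₂ _ habs]
    simp [fR, Real.exp_log h]

lemma concat_eq_big (K₁ K₂ : ℝ → ℝ × ℝ) (R : ℝ) (hR : 0 < R)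
    (h₁ : ∀ t : ℝ, R ≤ |t| → K₁ t = (t, 0))
    (h₂ : ∀ t : ℝ, R ≤ |t| → K₂ t = (t, 0)) :
    ∀ t : ℝ, Real.exp R ≤ |t| → concat K₁ K₂ t = (t, 0) := by
  intro t ht
  have hexp : 0 < Real.exp R := Real.exp_pos R
  rcases lt_trichotomy t 0 with h | h | h
  · rw [concat, if_pos h]
    have hpos : 0 < -t := by linarith
    have hle : Real.exp R ≤ -t := by rwa [abs_of_neg h] at ht
    have hlog : R ≤ Real.log (-t) := (Real.le_log_iff_exp_le hpos).2 hle
    have habs : R ≤ |(-Real.log (-t))| := by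
      rw [abs_of_nonpos (by linarith)]; linarith
    rw [h₁ _ habs]
    simp only [fL, neg_neg, Real.exp_log hpos]
  · exfalso; rw [h] at ht; simp at ht; linarith
  · rw [concat, if_neg (by linarith), if_neg (by linarith)]
    have hle : Real.exp R ≤ t := by rwa [abs_of_pos h] at ht
    have hlog : R ≤ Real.log t := (Real.le_log_iff_exp_le h).2 hle
    have habs : R ≤ |Real.log t| := by rw [abs_of_pos (by linarith)]; linarith
    rw [h₂ _ habs]
    simp [fR, Real.exp_log h]

/-- The concatenation of continuous injective long maps that coincide with the x-axis
outside a closed ball is a closed topological embedding of `ℝ` into `ℝ²`. -/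
theorem concat_isClosedEmbedding (K₁ K₂ : ℝ → ℝ × ℝ)
    (hc₁ : Continuous K₁) (hc₂ : Continuous K₂)
    (hi₁ : Function.Injective K₁) (hi₂ : Function.Injective K₂)
    (R : ℝ) (hR : 0 < R)
    (h₁ : ∀ t : ℝ, R ≤ |t| → K₁ t = (t, 0))
    (h₂ : ∀ t : ℝ, R ≤ |t| → K₂ t = (t, 0)) :
    Topology.IsClosedEmbedding (concat K₁ K₂) := by
  have hfL : Continuous fL := by unfold fL; fun_prop
  have hfR : Continuous fR := by unfold fR; fun_prop
  -- Continuity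
  have hcont : Continuous (concat K₁ K₂) := by
    rw [continuous_iff_continuousAt]
    intro t
    rcases lt_trichotomy t 0 with h | h | h
    · have hb : ContinuousAt (fun s => fL (K₁ (-Real.log (-s)))) t := by
        refine hfL.continuousAt.comp (hc₁.continuousAt.comp ?_)
        exact (((Real.continuousAt_log (by simpa using ne_of_lt h)).comp
          continuous_neg.continuousAt).neg)
      refine hb.congr ?_
      filter_upwards [Iio_mem_nhds h] with s hs
      rw [concat, if_pos (Set.mem_Iio.1 hs)]
    · have hb : ContinuousAt (fun s : ℝ => (s, (0:ℝ))) t :=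
        (continuous_id.prodMk continuous_const).continuousAt
      refine hb.congr ?_
      have hmem : Set.Ioo (-Real.exp (-R)) (Real.exp (-R)) ∈ 𝓝 t := by
        rw [h]
        exact Ioo_mem_nhds (by simpa using Real.exp_pos (-R)) (Real.exp_pos (-R))
      filter_upwards [hmem] with s hs
      exact (concat_eq_small K₁ K₂ R hR h₁ h₂ s (abs_lt.2 ⟨hs.1, hs.2⟩)).symm
    · have hb : ContinuousAt (fun s => fR (K₂ (Real.log s))) t := by
        exact hfR.continuousAt.comp
          (hc₂.continuousAt.comp (Real.continuousAt_log (ne_of_gt h)))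
      refine hb.congr ?_
      filter_upwards [Ioi_mem_nhds h] with s hs
      rw [concat, if_neg (by linarith [mem_Ioi.1 hs]), if_neg (by linarith [mem_Ioi.1 hs])]
  -- Injectivity
  have hneg : ∀ s : ℝ, s < 0 → (concat K₁ K₂ s).1 < 0 := by
    intro s hs
    rw [concat, if_pos hs]
    simpa [fL] using Real.exp_pos _
  have hpos : ∀ s : ℝ, 0 < s → 0 < (concat K₁ K₂ s).1 := by
    intro s hs
    rw [concat, if_neg (by linarith), if_neg (by linarith)]
    simpa [fR] using Real.exp_pos _
  have hzero : concat K₁ K₂ 0 = (0, 0) := by rw [concat]; simp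
  have hinj : Function.Injective (concat K₁ K₂) := by
    intro a b hab
    rcases lt_trichotomy a 0 with ha | ha | ha <;> rcases lt_trichotomy b 0 with hb | hb | hb
    · -- both negative
      rw [concat, if_pos ha, concat, if_pos hb] at hab
      have := hi₁ (fL_injective hab)
      have := neg_injective this
      have : -a = -b := by
        have ha' : (0:ℝ) < -a := by linarith
        have hb' : (0:ℝ) < -b := by linarith
        calc -a = Real.exp (Real.log (-a)) := (Real.exp_log ha').symm
          _ = Real.exp (Real.log (-b)) := by rw [this]
          _ = -b := Real.exp_log hb'
      linarith
    · exfalso; rw [hb] at hab; rw [hzero] at hab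
      have := hneg a ha; rw [hab] at this; simp at this
    · exfalso
      have h1 := hneg a ha
      have h2 := hpos b hb
      rw [hab] at h1; linarith
    · exfalso; rw [ha] at hab; rw [hzero] at hab
      have := hneg b hb; rw [← hab] at this; simp at this
    · rw [ha, hb]
    · exfalso; rw [ha] at hab; rw [hzero] at hab
      have := hpos b hb; rw [← hab] at this; simp at this
    · exfalso
      have h1 := hpos a ha
      have h2 := hneg b hb
      rw [hab] at h1; linarith
    · exfalso; rw [hb] at hab; rw [hzero] at hab
      have := hpos a ha; rw [hab] at this; simp at this
    · -- both positive
      rw [concat, if_neg (by linarith), if_neg (by linarith),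
        concat, if_neg (by linarith), if_neg (by linarith)] at hab
      have hlog := hi₂ (fR_injective hab)
      calc a = Real.exp (Real.log a) := (Real.exp_log ha).symm
        _ = Real.exp (Real.log b) := by rw [hlog]
        _ = b := Real.exp_log hb
  -- The line embedding
  have hline : Topology.IsClosedEmbedding (fun t : ℝ => ((t, (0:ℝ)) : ℝ × ℝ)) := by
    have hiso : Isometry (fun t : ℝ => ((t, (0:ℝ)) : ℝ × ℝ)) := by
      intro x y
      simp [Prod.edist_eq]
    exact hiso.isClosedEmbedding
  -- Properness via cocompact
  have htc : Tendsto (concat K₁ K₂) (cocompact ℝ) (cocompact (ℝ × ℝ)) := by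
    refine hline.tendsto_cocompact.congr' ?_
    have hmem : {t : ℝ | Real.exp R ≤ |t|} ∈ cocompact ℝ := by
      rw [mem_cocompact]
      refine ⟨Set.Icc (-Real.exp R) (Real.exp R), isCompact_Icc, ?_⟩
      intro t ht
      simp only [Set.mem_compl_iff, Set.mem_Icc, not_and_or, not_le] at ht
      have hexp := Real.exp_pos R
      rcases ht with h | h
      · show Real.exp R ≤ |t|
        rw [abs_of_neg (by linarith)]; linarith
      · show Real.exp R ≤ |t|
        rw [abs_of_pos (by linarith)]; linarith
    filter_upwards [hmem] with t ht
    exact (concat_eq_big K₁ K₂ R hR h₁ h₂ t ht).symm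
  have hproper : IsProperMap (concat K₁ K₂) :=
    isProperMap_iff_tendsto_cocompact.2 ⟨hcont, htc⟩
  exact Topology.IsClosedEmbedding.of_continuous_injective_isClosedMap hcont hinj
    hproper.isClosedMap
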